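/- For every integer m ≥ 1, the extreme polar coefficient satisfies c_m^F(−1, m) = m + 2, where c_m^F(−1, m) is defined by the SL(2,ℤ) continued-fraction sum. -/
import Mathlib


/-- `d n`: the coefficient of `q^(n+1)` in `∏ (1 - q^j)^{-24}`, i.e. the number of
24-tuples of integer partitions whose sizes sum to `n+1` (and `0` for `n < -1`). -/
def dcoef (n : ℤ) : ℤ :=
  if 0 ≤ n + 1 then
    ∑ v ∈ Finset.Nat.antidiagonalTuple 24 (n + 1).toNat,
      ∏ i, (Fintype.card (Nat.Partition (v i)) : ℤ)
  else 0

/-- The polar coefficient `c_m^F(ñ, ℓ̃)`, given by the `SL(2,ℤ)` continued-fraction sum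
over quadruples `(p, q, r, s)` with `ps - qr = 1`, `r, s > 0` and
`0 ≤ ℓ̃/(2m) - q/s < 1/(rs)`; only finitely many terms are nonzero. -/
noncomputable def polarCoef (m nt ℓt : ℤ) : ℤ :=
  ∑ᶠ (p : ℤ) (q : ℤ) (r : ℤ) (s : ℤ),
    if p * s - q * r = 1 ∧ 0 < r ∧ 0 < s ∧
        0 ≤ (ℓt : ℚ) / (2 * m) - (q : ℚ) / s ∧
        (ℓt : ℚ) / (2 * m) - (q : ℚ) / s < 1 / ((r : ℚ) * s) then
      (-2 * r * s * nt - 2 * p * q * m + (p * s + q * r) * ℓt) *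
        dcoef (r ^ 2 * nt + p ^ 2 * m - p * r * ℓt) *
        dcoef (s ^ 2 * nt + q ^ 2 * m - q * s * ℓt)
    else 0

lemma dcoef_neg_one : dcoef (-1) = 1 := by
  rw [dcoef, if_pos (by norm_num)]
  norm_num [Finset.Nat.antidiagonalTuple_zero_right]
  simp [Pi.zero_apply, Fintype.card_unique]

lemma dcoef_lt (n : ℤ) (h : n < -1) : dcoef n = 0 := if_neg (by omega)

theorem stmt14 (m : ℤ) (hm : 1 ≤ m) : polarCoef m (-1) m = m + 2 := by
  have hm0 : (m : ℚ) ≠ 0 := by exact_mod_cast (by omega : m ≠ 0)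
  have hmQ : (1 : ℚ) ≤ m := by exact_mod_cast hm
  set F : ℤ → ℤ → ℤ → ℤ → ℤ := fun p q r s =>
    if p * s - q * r = 1 ∧ 0 < r ∧ 0 < s ∧
        0 ≤ (m : ℚ) / (2 * m) - (q : ℚ) / s ∧
        (m : ℚ) / (2 * m) - (q : ℚ) / s < 1 / ((r : ℚ) * s) then
      (-2 * r * s * (-1) - 2 * p * q * m + (p * s + q * r) * m) *
        dcoef (r ^ 2 * (-1) + p ^ 2 * m - p * r * m) *
        dcoef (s ^ 2 * (-1) + q ^ 2 * m - q * s * m)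
    else 0 with hF
  have hhalf : (m : ℚ) / (2 * m) = 1 / 2 := by
    rw [mul_comm, div_eq_div_iff (by positivity) (by norm_num)]; ring
  have hkey : ∀ p q r s : ℤ, F p q r s =
      if p = 1 ∧ q = 0 ∧ r = 1 ∧ s = 1 then m + 2 else 0 := by
    intro p q r s
    by_cases hsp : p = 1 ∧ q = 0 ∧ r = 1 ∧ s = 1
    · obtain ⟨rfl, rfl, rfl, rfl⟩ := hsp
      rw [if_pos ⟨rfl, rfl, rfl, rfl⟩, hF]
      simp only
      rw [if_pos]
      · norm_num [dcoef_neg_one]; ring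
      · refine ⟨by ring, by norm_num, by norm_num, ?_, ?_⟩ <;>
          rw [hhalf] <;> norm_num
    · rw [if_neg hsp, hF]
      simp only
      split_ifs with hc
      · obtain ⟨h1, hr, hs, h3, h4⟩ := hc
        rw [hhalf] at h3 h4
        have hsQ : (0 : ℚ) < s := by exact_mod_cast hs
        have hrQ : (0 : ℚ) < r := by exact_mod_cast hr
        -- integer versions of rational constraints
        have e3 : 0 ≤ s - 2 * q := by
          have : (q : ℚ) / s ≤ 1 / 2 := by linarith
          rw [div_le_div_iff₀ hsQ (by norm_num)] at this
          have : (2 : ℚ) * q ≤ s := by linarith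
          exact_mod_cast sub_nonneg.mpr (by exact_mod_cast this)
        have e4 : r * (s - 2 * q) < 2 := by
          have h4' : 1 / 2 - (q : ℚ) / s < 1 / (r * s) := h4
          rw [div_sub_div _ _ (by norm_num : (2:ℚ) ≠ 0) hsQ.ne',
            div_lt_div_iff₀ (by positivity) (by positivity)] at h4'
          have h5 : ((s : ℚ) - 2 * q) * r * s < 2 * s := by push_cast at h4' ⊢; nlinarith
          have h6 : ((s : ℚ) - 2 * q) * r < 2 :=
            lt_of_mul_lt_mul_right (by nlinarith) hsQ.le
          have : ((s : ℤ) - 2 * q) * r < 2 := by exact_mod_cast h6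
          linarith [this]
        -- case analysis
        have hcase : s - 2 * q = 0 ∨ (s - 2 * q = 1 ∧ r = 1) := by
          rcases eq_or_lt_of_le e3 with h | h
          · exact Or.inl h.symm
          · right
            have h1' : 1 ≤ s - 2 * q := h
            have : r * (s - 2 * q) = 1 := by nlinarith
            rcases Int.mul_eq_one_iff_eq_one_or_neg_one.mp this with ⟨hr1, ht1⟩ | ⟨hr1, _⟩
            · exact ⟨ht1, hr1⟩
            · omega
        rcases hcase with h0 | ⟨h1', hr1⟩
        · -- s = 2q, so q * (2p - r) = 1, q = 1, s = 2
          have hs2 : s = 2 * q := by omega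
          have hq1 : q * (2 * p - r) = 1 := by rw [hs2] at h1; ring_nf; linarith [h1]
          have hq : q = 1 := by
            rcases Int.mul_eq_one_iff_eq_one_or_neg_one.mp hq1 with ⟨h, _⟩ | ⟨h, _⟩
            · exact h
            · omega
          have hs' : s = 2 := by omega
          rw [hq, hs']
          have : dcoef (2 ^ 2 * (-1) + 1 ^ 2 * m - 1 * 2 * m) = 0 := by
            apply dcoef_lt; omega
          rw [this, mul_zero]
        · -- r = 1, s = 2q+1, p(2q+1) = q+1
          have hs2 : s = 2 * q + 1 := by omega
          have hpq : p * (2 * q + 1) = q + 1 := by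
            rw [hs2, hr1] at h1; linarith [h1]
          have hq0 : 0 ≤ q := by omega
          have hq : q = 0 := by
            by_contra hq
            have hq1 : 1 ≤ q := by omega
            rcases le_or_gt p 0 with hp | hp
            · nlinarith
            · have : 1 ≤ p := hp
              nlinarith
          have hp1 : p = 1 := by subst hq; simpa using hpq
          exact absurd ⟨hp1, hq, hr1, by omega⟩ hsp
      · rfl
  -- collapse the finsums
  have step3 : ∀ p q r : ℤ, (∑ᶠ s : ℤ, F p q r s) =
      if p = 1 ∧ q = 0 ∧ r = 1 then m + 2 else 0 := by
    intro p q r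
    by_cases h : p = 1 ∧ q = 0 ∧ r = 1
    · obtain ⟨rfl, rfl, rfl⟩ := h
      rw [if_pos ⟨rfl, rfl, rfl⟩, finsum_eq_single _ (1 : ℤ)
        (fun s hs => by rw [hkey]; exact if_neg (by tauto)), hkey]
      simp
    · rw [if_neg h]
      exact finsum_eq_zero_of_forall_eq_zero fun s => by
        rw [hkey]; exact if_neg (by tauto)
  have step2 : ∀ p q : ℤ, (∑ᶠ r : ℤ, ∑ᶠ s : ℤ, F p q r s) =
      if p = 1 ∧ q = 0 then m + 2 else 0 := by
    intro p q
    by_cases h : p = 1 ∧ q = 0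
    · obtain ⟨rfl, rfl⟩ := h
      rw [if_pos ⟨rfl, rfl⟩, finsum_eq_single _ (1 : ℤ)
        (fun r hr => by rw [step3]; exact if_neg (by tauto)), step3]
      simp
    · rw [if_neg h]
      exact finsum_eq_zero_of_forall_eq_zero fun r => by
        rw [step3]; exact if_neg (by tauto)
  have step1 : ∀ p : ℤ, (∑ᶠ q : ℤ, ∑ᶠ r : ℤ, ∑ᶠ s : ℤ, F p q r s) =
      if p = 1 then m + 2 else 0 := by
    intro p
    by_cases h : p = 1
    · subst h
      rw [if_pos rfl, finsum_eq_single _ (0 : ℤ)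
        (fun q hq => by rw [step2]; exact if_neg (by tauto)), step2]
      simp
    · rw [if_neg h]
      exact finsum_eq_zero_of_forall_eq_zero fun q => by
        rw [step2]; exact if_neg (by tauto)
  have : polarCoef m (-1) m = ∑ᶠ p : ℤ, ∑ᶠ q : ℤ, ∑ᶠ r : ℤ, ∑ᶠ s : ℤ, F p q r s := rfl
  rw [this, finsum_eq_single _ (1 : ℤ)
    (fun p hp => by rw [step1]; exact if_neg hp), step1]
  simp
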